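/- Let ξ_1, ..., ξ_n be independent real random variables and t ∈ ℝ. Then (1/2)·min(∑_{j=1}^n P(ξ_j > t), 1) ≤ P(max_{j≤n} ξ_j > t) ≤ ∑_{j=1}^n P(ξ_j > t). -/

import Mathlib

open MeasureTheory ProbabilityTheory
open scoped ENNReal

lemma core_exp_ineq {n : ℕ} (q : Fin n → ℝ) (h0 : ∀ j, 0 ≤ q j) (h1 : ∀ j, q j ≤ 1) :
    (1 / 2 : ℝ) * min (∑ j, q j) 1 ≤ 1 - ∏ j, (1 - q j) := by
  set s := ∑ j, q j with hs
  have hs0 : 0 ≤ s := Finset.sum_nonneg fun j _ => h0 j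
  have hprod : ∏ j, (1 - q j) ≤ Real.exp (-s) := by
    have : Real.exp (-s) = ∏ j, Real.exp (-(q j)) := by
      rw [← Real.exp_sum, ← Finset.sum_neg_distrib]
    rw [this]
    refine Finset.prod_le_prod (fun j _ => by linarith [h1 j]) (fun j _ => ?_)
    have := Real.add_one_le_exp (-(q j))
    linarith
  have key : (1 / 2 : ℝ) * min s 1 ≤ 1 - Real.exp (-s) := by
    rcases le_or_gt s 1 with h | h
    · rw [min_eq_left h]
      have h2 : (1 + s) ≤ Real.exp s := by linarith [Real.add_one_le_exp s]
      have h3 : Real.exp (-s) * Real.exp s = 1 := by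
        rw [← Real.exp_add]; simp
      have h4 : 0 < Real.exp (-s) := Real.exp_pos _
      nlinarith
    · rw [min_eq_right h.le]
      have h2 : Real.exp (-s) < Real.exp (-1) := by
        apply Real.exp_lt_exp.2; linarith
      have h3 : Real.exp (-1) ≤ 1 / 2 := by
        rw [Real.exp_neg]
        rw [inv_le_comm₀ (Real.exp_pos 1) (by norm_num)]
        have := Real.exp_one_gt_d9
        linarith
      linarith
  linarith

/-- If `ξ 0, …, ξ (n-1)` are independent real random variables and `t ∈ ℝ`, then
`(1/2) · min (∑ j, P(ξ j > t)) 1 ≤ P(max_j ξ j > t) ≤ ∑ j, P(ξ j > t)`. -/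
theorem stmt0 {Ω : Type*} [MeasureSpace Ω] [IsProbabilityMeasure (ℙ : Measure Ω)]
    {n : ℕ} (ξ : Fin n → Ω → ℝ) (hmeas : ∀ j, Measurable (ξ j))
    (hindep : iIndepFun (m := fun _ => Real.measurableSpace) ξ ℙ) (t : ℝ) :
    (1 / 2 : ℝ≥0∞) * min (∑ j, ℙ {ω | t < ξ j ω}) 1 ≤ ℙ {ω | ∃ j, t < ξ j ω} ∧
      ℙ {ω | ∃ j, t < ξ j ω} ≤ ∑ j, ℙ {ω | t < ξ j ω} := by
  set A : Fin n → Set Ω := fun j => {ω | t < ξ j ω} with hA_def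
  have hA : ∀ j, MeasurableSet (A j) := fun j =>
    measurableSet_lt measurable_const (hmeas j)
  have hU : {ω : Ω | ∃ j, t < ξ j ω} = ⋃ j, A j := by
    ext ω; simp [hA_def]
  have hUmeas : MeasurableSet (⋃ j, A j) := MeasurableSet.iUnion hA
  -- upper bound
  have upper : ℙ (⋃ j, A j) ≤ ∑ j, ℙ (A j) := measure_iUnion_fintype_le _ _
  -- independence of complements
  have hcomp : (⋃ j, A j)ᶜ = ⋂ j, (A j)ᶜ := by
    simp [Set.compl_iUnion]
  have hmeasC : ℙ (⋂ j, (A j)ᶜ) = ∏ j, ℙ ((A j)ᶜ) := by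
    refine hindep.meas_iInter (fun j => ⟨Set.Iic t, measurableSet_Iic, ?_⟩)
    ext ω; simp [hA_def, not_lt]
  have hPU : ℙ (⋃ j, A j) = 1 - ∏ j, ℙ ((A j)ᶜ) := by
    rw [← hmeasC, ← hcomp, prob_compl_eq_one_sub hUmeas, ENNReal.sub_sub_cancel ENNReal.one_ne_top prob_le_one]
  have hPc : ∀ j, ℙ ((A j)ᶜ) = 1 - ℙ (A j) := fun j =>
    prob_compl_eq_one_sub (hA j)
  -- toReal setup
  set p : Fin n → ℝ≥0∞ := fun j => ℙ (A j) with hp_def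
  have hp1 : ∀ j, p j ≤ 1 := fun j => prob_le_one
  have hpt : ∀ j, p j ≠ ∞ := fun j => measure_ne_top _ _
  set q : Fin n → ℝ := fun j => (p j).toReal with hq_def
  have hq0 : ∀ j, 0 ≤ q j := fun j => ENNReal.toReal_nonneg
  have hq1 : ∀ j, q j ≤ 1 := fun j => by
    rw [hq_def]
    exact ENNReal.toReal_le_of_le_ofReal zero_le_one (by simpa using hp1 j)
  -- lower bound
  have lower : (1 / 2 : ℝ≥0∞) * min (∑ j, p j) 1 ≤ ℙ (⋃ j, A j) := by
    rw [← ENNReal.toReal_le_toReal (by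
        refine ENNReal.mul_ne_top (by norm_num) ?_
        exact ne_top_of_le_ne_top ENNReal.one_ne_top (min_le_right _ _))
      (measure_ne_top _ _)]
    have hsum_ne : (∑ j, p j) ≠ ∞ := by
      exact ENNReal.sum_ne_top.2 fun j _ => hpt j
    rw [ENNReal.toReal_mul, ENNReal.toReal_min hsum_ne ENNReal.one_ne_top,
      ENNReal.toReal_sum (fun j _ => hpt j)]
    have hPUtoReal : (ℙ (⋃ j, A j)).toReal = 1 - ∏ j, (1 - q j) := by
      rw [hPU]
      have hprod_le : (∏ j, ℙ ((A j)ᶜ)) ≤ 1 := by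
        calc (∏ j, ℙ ((A j)ᶜ)) ≤ ∏ j, (1 : ℝ≥0∞) :=
              Finset.prod_le_prod' fun j _ => prob_le_one
          _ = 1 := by simp
      rw [ENNReal.toReal_sub_of_le hprod_le ENNReal.one_ne_top, ENNReal.toReal_one,
        ENNReal.toReal_prod]
      congr 1
      refine Finset.prod_congr rfl fun j _ => ?_
      rw [hPc j, ENNReal.toReal_sub_of_le (hp1 j) ENNReal.one_ne_top, ENNReal.toReal_one]
    rw [hPUtoReal]
    have := core_exp_ineq q hq0 hq1
    simpa using this
  rw [hU]
  exact ⟨lower, upper⟩
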